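/- Let X be a Banach space and Y a closed subspace such that (B_Y, CB(X)) has the restricted center property. If the restricted Chebyshev-center map cent_{B_Y}(·) is Hausdorff metric continuous on CB(X), then cent_Y(·) is Hausdorff metric continuous on CB(X). -/

import Mathlib

open Metric Set Bornology Pointwise

/-- The farthest distance `r(v,B) = sup_{b ∈ B} ‖v - b‖`. -/
noncomputable def farr {X : Type*} [NormedAddCommGroup X] (v : X) (B : Set X) : ℝ :=
  ⨆ b : B, ‖v - (b : X)‖

/-- The restricted Chebyshev radius `rad_V(B) = inf_{v ∈ V} r(v,B)`. -/
noncomputable def rad {X : Type*} [NormedAddCommGroup X] (V B : Set X) : ℝ :=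
  ⨅ v : V, farr (v : X) B

/-- The set of restricted Chebyshev centers of `B` in `V`. -/
noncomputable def cheb {X : Type*} [NormedAddCommGroup X] (V B : Set X) : Set X :=
  {v ∈ V | farr v B = rad V B}
/-- Hausdorff metric continuity of the restricted Chebyshev-center map of `V` on the class
of nonempty closed bounded subsets. -/
noncomputable def hausdorffCont {X : Type*} [NormedAddCommGroup X] (V : Set X) : Prop :=
  ∀ B : Set X, B.Nonempty → IsClosed B → IsBounded B →
    ∀ ε > (0 : ℝ), ∃ δ > (0 : ℝ), ∀ A : Set X, A.Nonempty → IsClosed A → IsBounded A →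
      hausdorffDist B A < δ → hausdorffDist (cheb V B) (cheb V A) < ε

section aux

variable {X : Type*} [NormedAddCommGroup X]

lemma farr_nonneg (v : X) (B : Set X) : 0 ≤ farr v B :=
  Real.iSup_nonneg fun _ => norm_nonneg _

lemma farr_bdd {B : Set X} (hBb : IsBounded B) (v : X) :
    BddAbove (Set.range fun b : B => ‖v - (b : X)‖) := by
  obtain ⟨M, hM⟩ := isBounded_iff_forall_norm_le.1 hBb
  refine ⟨‖v‖ + M, ?_⟩
  rintro x ⟨b, rfl⟩
  calc ‖v - (b : X)‖ ≤ ‖v‖ + ‖(b : X)‖ := norm_sub_le _ _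
    _ ≤ ‖v‖ + M := by linarith [hM (b : X) b.2]

lemma le_farr {B : Set X} (hBb : IsBounded B) {v b : X} (hb : b ∈ B) :
    ‖v - b‖ ≤ farr v B :=
  le_ciSup (farr_bdd hBb v) (⟨b, hb⟩ : B)

lemma farr_le {B : Set X} (hB : B.Nonempty) {v : X} {r : ℝ}
    (h : ∀ b ∈ B, ‖v - b‖ ≤ r) : farr v B ≤ r := by
  have : Nonempty B := hB.to_subtype
  exact ciSup_le fun b => h b b.2

lemma rad_nonneg (V B : Set X) : 0 ≤ rad V B :=
  Real.iInf_nonneg fun _ => farr_nonneg _ _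

lemma rad_le_farr {V B : Set X} {v : X} (hv : v ∈ V) : rad V B ≤ farr v B :=
  ciInf_le ⟨0, by rintro x ⟨w, rfl⟩; exact farr_nonneg _ _⟩ (⟨v, hv⟩ : V)

lemma le_rad {V B : Set X} (hV : V.Nonempty) {r : ℝ}
    (h : ∀ v ∈ V, r ≤ farr v B) : r ≤ rad V B := by
  have : Nonempty V := hV.to_subtype
  exact le_ciInf fun v => h v v.2

/-- `farr` is 1-Lipschitz in the set variable w.r.t. the Hausdorff distance. -/
lemma farr_le_farr_add {A B : Set X} (hA : A.Nonempty) (hB : B.Nonempty)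
    (hAb : IsBounded A) (hBb : IsBounded B) (v : X) :
    farr v A ≤ farr v B + hausdorffDist B A := by
  have fin : EMetric.hausdorffEdist A B ≠ ⊤ :=
    hausdorffEdist_ne_top_of_nonempty_of_bounded hA hB hAb hBb
  refine farr_le hA fun a ha => ?_
  have h1 : infDist a B ≤ hausdorffDist A B := infDist_le_hausdorffDist_of_mem ha fin
  have h2 : ‖v - a‖ ≤ farr v B + infDist a B := by
    refine le_of_forall_pos_le_add fun ε hε => ?_
    have : infDist a B < infDist a B + ε := by linarith
    obtain ⟨b, hb, hab⟩ := (infDist_lt_iff hB).1 this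
    calc ‖v - a‖ = dist v a := (dist_eq_norm _ _).symm
      _ ≤ dist v b + dist b a := dist_triangle _ _ _
      _ = ‖v - b‖ + dist a b := by rw [dist_eq_norm, dist_comm]
      _ ≤ farr v B + (infDist a B + ε) := add_le_add (le_farr hBb hb) hab.le
      _ = farr v B + infDist a B + ε := by ring
  calc ‖v - a‖ ≤ farr v B + infDist a B := h2
    _ ≤ farr v B + hausdorffDist A B := by linarith
    _ = farr v B + hausdorffDist B A := by rw [hausdorffDist_comm]

lemma rad_le_rad_add {V A B : Set X} (hV : V.Nonempty) (hA : A.Nonempty) (hB : B.Nonempty)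
    (hAb : IsBounded A) (hBb : IsBounded B) :
    rad V A ≤ rad V B + hausdorffDist B A := by
  have key : rad V A - hausdorffDist B A ≤ rad V B := by
    refine le_rad hV fun v hv => ?_
    have := farr_le_farr_add hA hB hAb hBb v
    have := rad_le_farr (B := A) hv
    linarith
  linarith

/-- Absorption of the restricted Chebyshev problem into a large ball. -/
lemma cheb_inter_closedBall {W B : Set X} (hW : (0 : X) ∈ W) (hB : B.Nonempty)
    (hBb : IsBounded B) {M l : ℝ} (hM : ∀ b ∈ B, ‖b‖ ≤ M)
    (hl : M + rad W B + 1 ≤ l) :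
    cheb (W ∩ closedBall 0 l) B = cheb W B := by
  obtain ⟨b₀, hb₀⟩ := hB
  have hM0 : 0 ≤ M := le_trans (norm_nonneg _) (hM b₀ hb₀)
  have hr0 : 0 ≤ rad W B := rad_nonneg _ _
  have hl0 : (0 : ℝ) ≤ l := by linarith
  have h0V : (0 : X) ∈ W ∩ closedBall 0 l := ⟨hW, by simpa using hl0⟩
  -- norm bound for points with small farr
  have hnorm : ∀ v : X, ‖v‖ ≤ farr v B + M := by
    intro v
    calc ‖v‖ ≤ ‖v - b₀‖ + ‖b₀‖ := by
          simpa using norm_add_le (v - b₀) b₀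
      _ ≤ farr v B + M := add_le_add (le_farr hBb hb₀) (hM b₀ hb₀)
  have hradV : rad (W ∩ closedBall 0 l) B = rad W B := by
    refine le_antisymm ?_ (le_rad ⟨0, h0V⟩ fun v hv => rad_le_farr hv.1)
    by_contra hcon
    push_neg at hcon
    set t := min (rad (W ∩ closedBall 0 l) B) (rad W B + 1) with ht
    have h1 : rad W B < t := lt_min hcon (by linarith)
    have : Nonempty W := ⟨⟨0, hW⟩⟩
    obtain ⟨v, hv⟩ := exists_lt_of_ciInf_lt (show (⨅ v : W, farr (v : X) B) < t from h1)
    have hvt : farr (v : X) B < t := hv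
    have hvball : (v : X) ∈ closedBall (0 : X) l := by
      rw [mem_closedBall, dist_zero_right]
      have := hnorm (v : X)
      have h2 : t ≤ rad W B + 1 := min_le_right _ _
      linarith
    have h3 : rad (W ∩ closedBall 0 l) B ≤ farr (v : X) B :=
      rad_le_farr ⟨v.2, hvball⟩
    have h4 : t ≤ rad (W ∩ closedBall 0 l) B := min_le_left _ _
    linarith
  ext v
  constructor
  · rintro ⟨⟨hvW, _⟩, hfv⟩
    exact ⟨hvW, by rw [hfv, hradV]⟩
  · rintro ⟨hvW, hfv⟩
    have hvball : v ∈ closedBall (0 : X) l := by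
      rw [mem_closedBall, dist_zero_right]
      have := hnorm v
      rw [hfv] at this
      linarith
    exact ⟨⟨hvW, hvball⟩, by rw [hfv, hradV]⟩

end aux

section smul

variable {X : Type*} [NormedAddCommGroup X] [NormedSpace ℝ X]

lemma farr_smul {c : ℝ} (hc : 0 < c) (v : X) (B : Set X) :
    farr (c • v) (c • B) = c * farr v B := by
  have hsurj : Function.Surjective
      (fun b : B => (⟨c • (b : X), smul_mem_smul_set b.2⟩ : ↥(c • B))) := by
    rintro ⟨x, hx⟩
    obtain ⟨b, hb, rfl⟩ := hx
    exact ⟨⟨b, hb⟩, rfl⟩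
  unfold farr
  have hre : (⨆ b : ↥(c • B), ‖c • v - (b : X)‖) = ⨆ b : B, ‖c • v - c • (b : X)‖ :=
    (hsurj.iSup_comp fun y : ↥(c • B) => ‖c • v - (y : X)‖).symm
  rw [hre, Real.mul_iSup_of_nonneg hc.le]
  congr 1
  ext b
  rw [← smul_sub, norm_smul, Real.norm_eq_abs, abs_of_pos hc]

lemma rad_smul {c : ℝ} (hc : 0 < c) (V B : Set X) :
    rad (c • V) (c • B) = c * rad V B := by
  have hsurj : Function.Surjective
      (fun v : V => (⟨c • (v : X), smul_mem_smul_set v.2⟩ : ↥(c • V))) := by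
    rintro ⟨x, hx⟩
    obtain ⟨w, hw, rfl⟩ := hx
    exact ⟨⟨w, hw⟩, rfl⟩
  unfold rad
  have hre : (⨅ v : ↥(c • V), farr (v : X) (c • B)) = ⨅ v : V, farr (c • (v : X)) (c • B) :=
    (hsurj.iInf_comp fun y : ↥(c • V) => farr (y : X) (c • B)).symm
  rw [hre, Real.mul_iInf_of_nonneg hc.le]
  congr 1
  ext v
  exact farr_smul hc _ _

lemma cheb_smul {c : ℝ} (hc : 0 < c) (V B : Set X) :
    cheb (c • V) (c • B) = c • cheb V B := by
  have hc' : c ≠ 0 := hc.ne'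
  ext x
  rw [mem_smul_set_iff_inv_smul_mem₀ hc']
  constructor
  · rintro ⟨hxV, hfx⟩
    have hxV' : c⁻¹ • x ∈ V := (mem_smul_set_iff_inv_smul_mem₀ hc' _ _).1 hxV
    refine ⟨hxV', ?_⟩
    have h1 : farr x (c • B) = c * farr (c⁻¹ • x) B := by
      have := farr_smul hc (c⁻¹ • x) B
      rwa [smul_inv_smul₀ hc'] at this
    rw [h1, rad_smul hc] at hfx
    exact mul_left_cancel₀ hc' hfx
  · rintro ⟨hxV, hfx⟩
    refine ⟨(mem_smul_set_iff_inv_smul_mem₀ hc' _ _).2 hxV, ?_⟩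
    have h1 : farr x (c • B) = c * farr (c⁻¹ • x) B := by
      have := farr_smul hc (c⁻¹ • x) B
      rwa [smul_inv_smul₀ hc'] at this
    rw [h1, rad_smul hc, hfx]

lemma hausdorffDist_smul_le {c : ℝ} (hc : 0 < c) {A B : Set X}
    (hA : A.Nonempty) (hB : B.Nonempty) (hAb : IsBounded A) (hBb : IsBounded B) :
    hausdorffDist (c • A) (c • B) ≤ c * hausdorffDist A B := by
  have fin : EMetric.hausdorffEdist A B ≠ ⊤ :=
    hausdorffEdist_ne_top_of_nonempty_of_bounded hA hB hAb hBb
  have hd0 : 0 ≤ hausdorffDist A B := hausdorffDist_nonneg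
  refine le_of_forall_pos_le_add fun ε hε => ?_
  have hεc : 0 < ε / c := div_pos hε hc
  refine hausdorffDist_le_of_mem_dist (by positivity) ?_ ?_
  · rintro x ⟨a, ha, rfl⟩
    obtain ⟨b, hb, hab⟩ := exists_dist_lt_of_hausdorffDist_lt ha
      (show hausdorffDist A B < hausdorffDist A B + ε / c by linarith) fin
    refine ⟨c • b, smul_mem_smul_set hb, ?_⟩
    rw [dist_smul₀, Real.norm_eq_abs, abs_of_pos hc]
    calc c * dist a b ≤ c * (hausdorffDist A B + ε / c) :=
          mul_le_mul_of_nonneg_left hab.le hc.le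
      _ = c * hausdorffDist A B + ε := by field_simp
  · rintro x ⟨b, hb, rfl⟩
    obtain ⟨a, ha, hab⟩ := exists_dist_lt_of_hausdorffDist_lt' hb
      (show hausdorffDist A B < hausdorffDist A B + ε / c by linarith) fin
    refine ⟨c • a, smul_mem_smul_set ha, ?_⟩
    rw [dist_smul₀, Real.norm_eq_abs, abs_of_pos hc]
    calc c * dist b a ≤ c * (hausdorffDist A B + ε / c) := by
          rw [dist_comm]; exact mul_le_mul_of_nonneg_left hab.le hc.le
      _ = c * hausdorffDist A B + ε := by field_simp

end smul

theorem stmt18 {X : Type*} [NormedAddCommGroup X] [NormedSpace ℝ X] [CompleteSpace X]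
    (Y : Subspace ℝ X) (hYc : IsClosed (Y : Set X))
    (hrcp : ∀ B : Set X, B.Nonempty → IsClosed B → IsBounded B →
      (cheb ((Y : Set X) ∩ closedBall 0 1) B).Nonempty)
    (h : hausdorffCont ((Y : Set X) ∩ closedBall 0 1)) :
    hausdorffCont (Y : Set X) := by
  intro B hBne hBc hBb ε hε
  obtain ⟨M, hM⟩ := isBounded_iff_forall_norm_le.1 hBb
  obtain ⟨b₀, hb₀⟩ := id hBne
  have hM0 : 0 ≤ M := le_trans (norm_nonneg _) (hM b₀ hb₀)
  set r := rad (Y : Set X) B with hr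
  have hr0 : 0 ≤ r := rad_nonneg _ _
  set lam : ℝ := M + r + 3 with hlam
  have hlam0 : 0 < lam := by positivity
  have hlam' : lam ≠ 0 := hlam0.ne'
  set V : Set X := (Y : Set X) ∩ closedBall 0 1 with hV
  -- the scaled set lam • V equals Y ∩ closedBall 0 lam
  have hsmulV : lam • V = (Y : Set X) ∩ closedBall 0 lam := by
    rw [hV, smul_set_inter₀ hlam']
    congr 1
    · ext x
      rw [mem_smul_set_iff_inv_smul_mem₀ hlam']
      constructor
      · intro hx
        have := Y.smul_mem lam hx
        rwa [smul_inv_smul₀ hlam'] at this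
      · intro hx
        exact Y.smul_mem lam⁻¹ hx
    · rw [_root_.smul_closedBall lam (0:X) zero_le_one, smul_zero, Real.norm_eq_abs,
        abs_of_pos hlam0, mul_one]
  -- scaled version of B
  have hB'ne : (lam⁻¹ • B).Nonempty := hBne.smul_set
  have hB'c : IsClosed (lam⁻¹ • B) := hBc.smul_of_ne_zero (inv_ne_zero hlam')
  have hB'b : IsBounded (lam⁻¹ • B) := hBb.smul₀ lam⁻¹
  have hεlam : 0 < ε / lam := div_pos hε hlam0
  obtain ⟨δ', hδ'0, hδ'⟩ := h (lam⁻¹ • B) hB'ne hB'c hB'b (ε / lam) hεlam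
  refine ⟨min (lam * δ') 1, lt_min (by positivity) one_pos, ?_⟩
  intro A hAne hAc hAb hdist
  have hd1 : hausdorffDist B A < 1 := lt_of_lt_of_le hdist (min_le_right _ _)
  have hdlam : hausdorffDist B A < lam * δ' := lt_of_lt_of_le hdist (min_le_left _ _)
  have hd0 : 0 ≤ hausdorffDist B A := hausdorffDist_nonneg
  have finBA : EMetric.hausdorffEdist B A ≠ ⊤ :=
    hausdorffEdist_ne_top_of_nonempty_of_bounded hBne hAne hBb hAb
  -- norm bound on A
  have hMA : ∀ a ∈ A, ‖a‖ ≤ M + 1 := by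
    intro a ha
    obtain ⟨b, hb, hab⟩ := exists_dist_lt_of_hausdorffDist_lt' ha hd1 finBA
    calc ‖a‖ ≤ ‖b‖ + ‖a - b‖ := by simpa using norm_add_le b (a - b)
      _ = ‖b‖ + dist b a := by rw [dist_eq_norm, norm_sub_rev]
      _ ≤ M + 1 := add_le_add (hM b hb) hab.le
  -- radius bound for A
  have hradA : rad (Y : Set X) A ≤ r + 1 := by
    have := rad_le_rad_add (V := (Y : Set X)) ⟨0, Y.zero_mem⟩ hAne hBne hAb hBb
    rw [← hr] at this
    linarith
  -- absorption identities
  have key : ∀ (C : Set X), C.Nonempty → IsBounded C →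
      (∀ x ∈ C, ‖x‖ ≤ M + 1) → rad (Y : Set X) C ≤ r + 1 →
      cheb (Y : Set X) C = lam • cheb V (lam⁻¹ • C) := by
    intro C hCne hCb hMC hradC
    have h1 : cheb ((Y : Set X) ∩ closedBall 0 lam) C = cheb (Y : Set X) C :=
      cheb_inter_closedBall Y.zero_mem hCne hCb hMC (by linarith)
    have h2 : lam • lam⁻¹ • C = C := smul_inv_smul₀ hlam' C
    have h3 := cheb_smul hlam0 V (lam⁻¹ • C)
    rw [← h1, ← hsmulV, ← h3, h2]
  have eqB : cheb (Y : Set X) B = lam • cheb V (lam⁻¹ • B) :=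
    key B hBne hBb (fun x hx => le_trans (hM x hx) (by linarith)) (by rw [← hr]; linarith)
  have eqA : cheb (Y : Set X) A = lam • cheb V (lam⁻¹ • A) := key A hAne hAb hMA hradA
  have hA'ne : (lam⁻¹ • A).Nonempty := hAne.smul_set
  have hA'c : IsClosed (lam⁻¹ • A) := hAc.smul_of_ne_zero (inv_ne_zero hlam')
  have hA'b : IsBounded (lam⁻¹ • A) := hAb.smul₀ lam⁻¹
  have hdist' : hausdorffDist (lam⁻¹ • B) (lam⁻¹ • A) < δ' := by
    calc hausdorffDist (lam⁻¹ • B) (lam⁻¹ • A) ≤ lam⁻¹ * hausdorffDist B A :=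
          hausdorffDist_smul_le (inv_pos.2 hlam0) hBne hAne hBb hAb
      _ < lam⁻¹ * (lam * δ') := mul_lt_mul_of_pos_left hdlam (inv_pos.2 hlam0)
      _ = δ' := by field_simp
  have hfar := hδ' (lam⁻¹ • A) hA'ne hA'c hA'b hdist'
  have hSne : (cheb V (lam⁻¹ • B)).Nonempty := hrcp (lam⁻¹ • B) hB'ne hB'c hB'b
  have hTne : (cheb V (lam⁻¹ • A)).Nonempty := hrcp (lam⁻¹ • A) hA'ne hA'c hA'b
  have hSb : IsBounded (cheb V (lam⁻¹ • B)) :=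
    (isBounded_closedBall (x := (0 : X)) (r := 1)).subset fun x hx => hx.1.2
  have hTb : IsBounded (cheb V (lam⁻¹ • A)) :=
    (isBounded_closedBall (x := (0 : X)) (r := 1)).subset fun x hx => hx.1.2
  rw [eqB, eqA]
  calc hausdorffDist (lam • cheb V (lam⁻¹ • B)) (lam • cheb V (lam⁻¹ • A))
      ≤ lam * hausdorffDist (cheb V (lam⁻¹ • B)) (cheb V (lam⁻¹ • A)) :=
        hausdorffDist_smul_le hlam0 hSne hTne hSb hTb
    _ < lam * (ε / lam) := mul_lt_mul_of_pos_left hfar hlam0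
    _ = ε := by field_simp
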